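/- For any two strings x and y of length n over a metric space, there exists an optimal (minimum-cost) correspondence between x and y whose total length is at most 2n. Equivalently, there is an optimal correspondence in which for each pair of overlapping runs, at most one of the two runs is extended. -/

import Mathlib

open scoped BigOperators

variable {α : Type*}

/-- `xb` is the expansion of `x` obtained by replacing the `i`-th letter of `x`
with `ks[i] ≥ 1` consecutive copies of itself (equivalently, by extending runs). -/
def IsExpansionWith (x : List α) (ks : List ℕ) (xb : List α) : Prop :=
  ks.length = x.length ∧ (∀ k ∈ ks, 1 ≤ k) ∧
    xb = (x.zip ks).flatMap fun p => List.replicate p.2 p.1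

/-- `xb` is an expansion of `x` (obtained by extending runs). -/
def IsExpansion (x xb : List α) : Prop := ∃ ks, IsExpansionWith x ks xb

/-- The cost of a correspondence: sum of pointwise distances. -/
def corrCost (d : α → α → ℝ) (xb yb : List α) : ℝ :=
  ((xb.zip yb).map fun p => d p.1 p.2).sum

/-- A correspondence between `x` and `y`: a pair of equal-length expansions. -/
def IsCorrespondence (x y xb yb : List α) : Prop :=
  IsExpansion x xb ∧ IsExpansion y yb ∧ xb.length = yb.length

/-- Dynamic time warping distance: minimum cost of a correspondence. -/
noncomputable def dtw (d : α → α → ℝ) (x y : List α) : ℝ :=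
  sInf {c | ∃ xb yb, IsCorrespondence x y xb yb ∧ c = corrCost d xb yb}

/-- The maximal runs of equal letters of a list. -/
def runsOf [DecidableEq α] (x : List α) : List (List α) := x.splitBy (· == ·)

/-- Number of runs. -/
def numRuns [DecidableEq α] (x : List α) : ℕ := (runsOf x).length

/-- Length of the final run. -/
def lastRunLen [DecidableEq α] (x : List α) : ℕ := ((runsOf x).getLastD []).length

/-- Length of the `i`-th run (0-indexed). -/
def runLen [DecidableEq α] (x : List α) (i : ℕ) : ℕ := ((runsOf x).getD i []).length

/-- The letter populating the `i`-th run (0-indexed). -/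
def runLetter [DecidableEq α] [Inhabited α] (x : List α) (i : ℕ) : α :=
  ((runsOf x).getD i []).headI

/-- The concatenation of the first `k` runs of `x`. -/
def firstRuns [DecidableEq α] (k : ℕ) (x : List α) : List α := ((runsOf x).take k).flatten

/-- The prefix of `y` consisting of its first `ry` runs, up through the `oy`-th
letter of the `ry`-th run (runs are 1-indexed here). -/
def runPrefix [DecidableEq α] (ry oy : ℕ) (y : List α) : List α :=
  firstRuns (ry - 1) y ++ ((runsOf y).getD (ry - 1) []).take oy

/-- The subproblem `SP(x, y, rx, ry, oy)`: the minimum cost of a correspondence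
between the first `rx` runs of `x` and the prefix of `y` ending at the `oy`-th
letter of its `ry`-th run, under the constraint that the final (`ry`-th) run of
the `y`-prefix is not extended; `⊤` if no such correspondence exists. -/
noncomputable def SP [DecidableEq α] (d : α → α → ℝ) (x y : List α) (rx ry oy : ℕ) : EReal :=
  sInf ((fun p : List α × List α => ((corrCost d p.1 p.2 : ℝ) : EReal)) ''
    {p | IsCorrespondence (firstRuns rx x) (runPrefix ry oy y) p.1 p.2 ∧
         (0 < oy → lastRunLen p.2 = oy)})

/-- Generalized edit distance over a metric with null character `nul`:
insertion/deletion of `l` costs `d nul l`, substitution of `l` by `l'` costs `d l l'`. -/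
noncomputable def ged (d : α → α → ℝ) (nul : α) : List α → List α → ℝ
  | [], [] => 0
  | [], b :: ys => d nul b + ged d nul [] ys
  | a :: xs, [] => d nul a + ged d nul xs []
  | a :: xs, b :: ys =>
      min (d a b + ged d nul xs ys)
        (min (d nul a + ged d nul xs (b :: ys)) (d nul b + ged d nul (a :: xs) ys))
  termination_by x y => x.length + y.length

/-- Simple (Hamming/Levenshtein) edit distance: unit-cost insertions, deletions
and substitutions. -/
def edH [DecidableEq α] : List α → List α → ℕ
  | [], ys => ys.length
  | xs, [] => xs.length
  | a :: xs, b :: ys =>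
      min ((if a = b then 0 else 1) + edH xs ys)
        (min (1 + edH xs (b :: ys)) (1 + edH (a :: xs) ys))
  termination_by x y => x.length + y.length

/-- Simple edit distance with only unit-cost insertions and deletions. -/
def edS [DecidableEq α] : List α → List α → ℕ
  | [], ys => ys.length
  | xs, [] => xs.length
  | a :: xs, b :: ys =>
      if a = b then
        min (edS xs ys) (min (1 + edS xs (b :: ys)) (1 + edS (a :: xs) ys))
      else
        min (1 + edS xs (b :: ys)) (1 + edS (a :: xs) ys)
  termination_by x y => x.length + y.length

/-- The padded string `p(x) = ∅ x₁ ∅ x₂ ∅ ⋯ xₙ ∅`. -/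
def pad (nul : α) (x : List α) : List α := nul :: x.flatMap fun a => [a, nul]

/-- The `r`-simplification for edit distance: remove all letters of magnitude at most `r`. -/
noncomputable def sEd [MetricSpace α] (nul : α) (r : ℝ) (x : List α) : List α :=
  x.filter fun l => decide (r < dist nul l)

section DTWAux

variable {α : Type*}

lemma expansion_nil' {xb : List α} (h : IsExpansion ([] : List α) xb) : xb = [] := by
  obtain ⟨ks, h1, _, h3⟩ := h
  simp at h3; exact h3

lemma expansion_cons' {a : α} {x' xb : List α} (h : IsExpansion (a :: x') xb) :
    ∃ k X, 1 ≤ k ∧ IsExpansion x' X ∧ xb = List.replicate k a ++ X := by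
  obtain ⟨ks, hlen, hpos, hxb⟩ := h
  cases ks with
  | nil => simp at hlen
  | cons k ks' =>
    refine ⟨k, (x'.zip ks').flatMap fun p => List.replicate p.2 p.1, hpos k (by simp),
      ⟨ks', by simpa using hlen, fun j hj => hpos j (List.mem_cons_of_mem _ hj), rfl⟩, ?_⟩
    simpa using hxb

lemma expansion_build {a : α} {k : ℕ} (hk : 1 ≤ k) {x' X : List α} (h : IsExpansion x' X) :
    IsExpansion (a :: x') (List.replicate k a ++ X) := by
  obtain ⟨ks, hlen, hpos, hX⟩ := h
  refine ⟨k :: ks, by simpa using hlen, ?_, by simp [hX]⟩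
  intro j hj
  rcases List.mem_cons.1 hj with rfl | hj
  exacts [hk, hpos j hj]

lemma expansion_cons_self {b : α} {y' Y : List α} (h : IsExpansion (b :: y') Y) :
    IsExpansion (b :: y') (b :: Y) := by
  obtain ⟨k, X, hk, hX, rfl⟩ := expansion_cons' h
  have h2 := expansion_build (a := b) (k := k + 1) (by omega) hX
  simpa [List.replicate_succ] using h2

lemma expansion_self (x : List α) : IsExpansion x x := by
  induction x with
  | nil => exact ⟨[], rfl, by simp, by simp⟩
  | cons a x' ih => simpa using expansion_build (a := a) le_rfl ih

lemma mem_of_mem_expansion : ∀ {x xb : List α}, IsExpansion x xb → ∀ a ∈ xb, a ∈ x := by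
  intro x
  induction x with
  | nil => intro xb h a ha; rw [expansion_nil' h] at ha; simp at ha
  | cons b x' ih =>
    intro xb h a ha
    obtain ⟨k, X, hk, hX, rfl⟩ := expansion_cons' h
    rcases List.mem_append.1 ha with ha | ha
    · simp [List.eq_of_mem_replicate ha]
    · exact List.mem_cons_of_mem _ (ih hX a ha)

lemma corrCost_cons (d : α → α → ℝ) (a b : α) (X Y : List α) :
    corrCost d (a :: X) (b :: Y) = d a b + corrCost d X Y := by
  simp [corrCost]

lemma corrCost_nonneg (d : α → α → ℝ) (hd : ∀ a b, 0 ≤ d a b) (X Y : List α) :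
    0 ≤ corrCost d X Y := by
  apply List.sum_nonneg
  intro r hr
  obtain ⟨p, _, rfl⟩ := List.mem_map.1 hr
  exact hd _ _

lemma shorten (d : α → α → ℝ) (hd : ∀ a b, 0 ≤ d a b) :
    ∀ L (x y xb yb : List α), xb.length = L → IsCorrespondence x y xb yb →
    ∃ xb' yb', IsCorrespondence x y xb' yb' ∧
      corrCost d xb' yb' ≤ corrCost d xb yb ∧ xb'.length ≤ x.length + y.length := by
  intro L
  induction L using Nat.strong_induction_on with
  | _ L IH =>
  rintro x y xb yb hL ⟨hex, hey, hlen⟩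
  match x, y with
  | [], y =>
    have hxb : xb = [] := expansion_nil' hex
    exact ⟨xb, yb, ⟨hex, hey, hlen⟩, le_rfl, by simp [hxb]⟩
  | a :: x', [] =>
    have hyb : yb = [] := expansion_nil' hey
    have : xb = [] := by
      rw [hyb] at hlen; exact List.length_eq_zero_iff.mp hlen
    exact ⟨xb, yb, ⟨hex, hey, hlen⟩, le_rfl, by simp [this]⟩
  | a :: x', b :: y' =>
    obtain ⟨k, X, hk, hX, rfl⟩ := expansion_cons' hex
    obtain ⟨l, Y, hl, hY, rfl⟩ := expansion_cons' hey
    obtain ⟨k', rfl⟩ : ∃ k', k = k' + 1 := ⟨k - 1, by omega⟩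
    obtain ⟨l', rfl⟩ : ∃ l', l = l' + 1 := ⟨l - 1, by omega⟩
    simp only [List.replicate_succ, List.cons_append] at hL hlen ⊢
    set X₀ := List.replicate k' a ++ X with hX₀
    set Y₀ := List.replicate l' b ++ Y with hY₀
    have hlen' : X₀.length = Y₀.length := by simp only [List.length_cons] at hlen; omega
    have hL1 : 1 ≤ L := by simp only [List.length_cons] at hL; omega
    have hLX : X₀.length = L - 1 := by simp only [List.length_cons] at hL; omega
    rcases Nat.eq_zero_or_pos k' with rfl | hk'
    · rcases Nat.eq_zero_or_pos l' with rfl | hl'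
      · -- k = l = 1 : recurse on (x', y')
        simp only [List.replicate_zero, List.nil_append] at hX₀ hY₀
        obtain ⟨X', Y', hc', hcost', hlen2⟩ := IH (L - 1) (by omega) x' y' X₀ Y₀ hLX
          ⟨by rw [hX₀]; simpa using hX, by rw [hY₀]; simpa using hY, hlen'⟩
        refine ⟨a :: X', b :: Y', ⟨?_, ?_, by simp [hc'.2.2]⟩, ?_, by simp only [List.length_cons]; omega⟩
        · simpa using expansion_build (a := a) le_rfl hc'.1
        · simpa using expansion_build (a := b) le_rfl hc'.2.1
        · rw [corrCost_cons, corrCost_cons]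
          exact add_le_add_right hcost' _
      · -- k = 1, l ≥ 2 : recurse on (x', b :: y')
        simp only [List.replicate_zero, List.nil_append] at hX₀
        have hY₀e : IsExpansion (b :: y') Y₀ := expansion_build hl' hY
        obtain ⟨X', Y', hc', hcost', hlen2⟩ := IH (L - 1) (by omega) x' (b :: y') X₀ Y₀ hLX
          ⟨by rw [hX₀]; simpa using hX, hY₀e, hlen'⟩
        refine ⟨a :: X', b :: Y', ⟨?_, ?_, by simp [hc'.2.2]⟩, ?_, by simp only [List.length_cons] at hlen2 ⊢; omega⟩
        · simpa using expansion_build (a := a) le_rfl hc'.1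
        · exact expansion_cons_self hc'.2.1
        · rw [corrCost_cons, corrCost_cons]
          exact add_le_add_right hcost' _
    · rcases Nat.eq_zero_or_pos l' with rfl | hl'
      · -- k ≥ 2, l = 1 : recurse on (a :: x', y')
        simp only [List.replicate_zero, List.nil_append] at hY₀
        have hX₀e : IsExpansion (a :: x') X₀ := expansion_build hk' hX
        obtain ⟨X', Y', hc', hcost', hlen2⟩ := IH (L - 1) (by omega) (a :: x') y' X₀ Y₀ hLX
          ⟨hX₀e, by rw [hY₀]; simpa using hY, hlen'⟩
        refine ⟨a :: X', b :: Y', ⟨?_, ?_, by simp [hc'.2.2]⟩, ?_, by simp only [List.length_cons] at hlen2 ⊢; omega⟩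
        · exact expansion_cons_self hc'.1
        · simpa using expansion_build (a := b) le_rfl hc'.2.1
        · rw [corrCost_cons, corrCost_cons]
          exact add_le_add_right hcost' _
      · -- k ≥ 2, l ≥ 2 : drop one copy of each, recurse on same (x, y)
        have hX₀e : IsExpansion (a :: x') X₀ := expansion_build hk' hX
        have hY₀e : IsExpansion (b :: y') Y₀ := expansion_build hl' hY
        obtain ⟨X', Y', hc', hcost', hlen2⟩ := IH (L - 1) (by omega) (a :: x') (b :: y') X₀ Y₀
          hLX ⟨hX₀e, hY₀e, hlen'⟩
        refine ⟨X', Y', hc', ?_, hlen2⟩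
        calc corrCost d X' Y' ≤ corrCost d X₀ Y₀ := hcost'
          _ ≤ d a b + corrCost d X₀ Y₀ := le_add_of_nonneg_left (hd a b)
          _ = corrCost d (a :: X₀) (b :: Y₀) := (corrCost_cons d a b X₀ Y₀).symm

end DTWAux
theorem stmt1 [MetricSpace α] (n : ℕ) (x y : List α)
    (hx : x.length = n) (hy : y.length = n) :
    ∃ xb yb : List α, IsCorrespondence x y xb yb ∧
      corrCost dist xb yb = dtw dist x y ∧ xb.length ≤ 2 * n := by
  classical
  set S' : Set (List α × List α) :=
    {p | IsCorrespondence x y p.1 p.2 ∧ p.1.length ≤ 2 * n} with hS'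
  have hid : (x, y) ∈ S' := ⟨⟨expansion_self x, expansion_self y, by rw [hx, hy]⟩, show x.length ≤ 2 * n by omega⟩
  have hA : ∀ z : List α, {l : List α | l.length ≤ 2 * n ∧ ∀ a ∈ l, a ∈ z}.Finite := by
    intro z
    have : Finite {a // a ∈ z} := (z.finite_toSet).to_subtype
    have h2 := (List.finite_length_le {a // a ∈ z} (2 * n)).image (List.map Subtype.val)
    refine h2.subset ?_
    rintro l ⟨hl, hmem⟩
    refine ⟨l.pmap (fun a h => ⟨a, h⟩) hmem, by simpa using hl, ?_⟩
    simp [List.map_pmap, List.pmap_eq_map]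
  have hfin : S'.Finite := by
    refine ((hA x).prod (hA y)).subset ?_
    rintro ⟨xb, yb⟩ ⟨⟨hex, hey, hlen⟩, hshort⟩
    exact ⟨⟨hshort, mem_of_mem_expansion hex⟩,
      ⟨by rw [← hlen]; exact hshort, mem_of_mem_expansion hey⟩⟩
  obtain ⟨p, hpS, hpmin⟩ :=
    Set.exists_min_image S' (fun p => corrCost dist p.1 p.2) hfin ⟨_, hid⟩
  refine ⟨p.1, p.2, hpS.1, ?_, hpS.2⟩
  have hlb : ∀ c ∈ {c | ∃ xb yb, IsCorrespondence x y xb yb ∧ c = corrCost dist xb yb},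
      corrCost dist p.1 p.2 ≤ c := by
    rintro c ⟨xb, yb, hc, rfl⟩
    obtain ⟨xb', yb', hc', hcost', hlen'⟩ :=
      shorten dist (fun a b => dist_nonneg) xb.length x y xb yb rfl hc
    have hmemS' : (xb', yb') ∈ S' := ⟨hc', show xb'.length ≤ 2 * n by omega⟩
    exact le_trans (hpmin _ hmemS') hcost'
  have hmem : corrCost dist p.1 p.2 ∈
      {c | ∃ xb yb, IsCorrespondence x y xb yb ∧ c = corrCost dist xb yb} :=
    ⟨p.1, p.2, hpS.1, rfl⟩
  rw [dtw]
  exact le_antisymm (le_csInf ⟨_, hmem⟩ hlb) (csInf_le ⟨_, hlb⟩ hmem)
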